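/- Let $r \ge 3$, $l \ge r+2$. Let $G$ be a left-compressed $r$-graph on vertex set $[l]$ containing the clique $[l-1]^{(r)}$ and satisfying $|[l-2]^{(r-1)} \setminus E_l| \ge 2^{r-3} |E_{(l-1)l}|$. Then $\lambda(G) = \lambda([l-1]^{(r)})$. -/

import Mathlib

open Finset

/-- Weightings on vertex set `[n] = {1,…,n}`: nonnegative, summing to 1, zero outside `[n]`. -/
def simplexOn (n : ℕ) (x : ℕ → ℝ) : Prop :=
  (∀ i, 0 ≤ x i) ∧ (∑ i ∈ Finset.Icc 1 n, x i = 1) ∧ ∀ i, i ∉ Finset.Icc 1 n → x i = 0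

/-- `λ(F, x) = ∑_{e ∈ F} ∏_{i ∈ e} x i` for a family of finite sets `F`. -/
def lagF (E : Finset (Finset ℕ)) (x : ℕ → ℝ) : ℝ := ∑ e ∈ E, ∏ i ∈ e, x i

/-- The Lagrangian of the hypergraph with edge set `E` on vertex set `[n]`. -/
noncomputable def lagr (n : ℕ) (E : Finset (Finset ℕ)) : ℝ :=
  sSup {v : ℝ | ∃ x : ℕ → ℝ, simplexOn n x ∧ v = lagF E x}

/-- `E` is the edge set of an `r`-uniform hypergraph on vertex set `[n]`. -/
def isRGraph (r n : ℕ) (E : Finset (Finset ℕ)) : Prop :=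
  ∀ e ∈ E, e.card = r ∧ e ⊆ Finset.Icc 1 n

/-- The complete `r`-graph `[l]^(r)`: all `r`-subsets of `[l]`. -/
def completeR (r l : ℕ) : Finset (Finset ℕ) := (Finset.Icc 1 l).powersetCard r

/-- The link `E_i` of vertex `i`. -/
def link (E : Finset (Finset ℕ)) (i : ℕ) : Finset (Finset ℕ) :=
  (E.filter fun e => i ∈ e).image fun e => e.erase i

/-- The pair link `E_{ij}`. -/
def link2 (E : Finset (Finset ℕ)) (i j : ℕ) : Finset (Finset ℕ) :=
  (E.filter fun e => i ∈ e ∧ j ∈ e).image fun e => (e.erase i).erase j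

/-- `E_{i \ j} = E_i ∩ E_j^c`. -/
def linkDiff (E : Finset (Finset ℕ)) (i j : ℕ) : Finset (Finset ℕ) :=
  (link E i).filter fun A => insert j A ∉ E

/-- `A` dominates `B` from below: same size and the `k`-th smallest element of `A`
is at most the `k`-th smallest element of `B`, for every `k`. -/
def domBelow (A B : Finset ℕ) : Prop :=
  A.card = B.card ∧ ∀ k, (Finset.sort A (· ≤ ·)).getD k 0 ≤ (Finset.sort B (· ≤ ·)).getD k 0

/-- `E` is left-compressed. -/
def leftCompressed (E : Finset (Finset ℕ)) : Prop :=
  ∀ B ∈ E, ∀ A : Finset ℕ, (∀ a ∈ A, 1 ≤ a) → domBelow A B → A ∈ E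

/-- The vertex set `T` spans a clique in the `r`-graph `E`. -/
def hasCliqueOn (E : Finset (Finset ℕ)) (r : ℕ) (T : Finset ℕ) : Prop :=
  ∀ e ⊆ T, e.card = r → e ∈ E

/-- `x` is an optimal weighting for the `r`-graph `E` on `[n]`. -/
def isOptimal (n : ℕ) (E : Finset (Finset ℕ)) (x : ℕ → ℝ) : Prop :=
  simplexOn n x ∧ lagF E x = lagr n E

/-- Number of nonzero weights. -/
noncomputable def suppCard (n : ℕ) (x : ℕ → ℝ) : ℕ := ((Finset.Icc 1 n).filter fun i => x i ≠ 0).card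

/-- A minimal optimal weighting: optimal, and any weighting with fewer nonzero
weights has strictly smaller Lagrangian value. -/
def isMinOptimal (n : ℕ) (E : Finset (Finset ℕ)) (x : ℕ → ℝ) : Prop :=
  isOptimal n E x ∧
    ∀ y : ℕ → ℝ, simplexOn n y → suppCard n y < suppCard n x → lagF E y < lagr n E

open Finset

private lemma aux_cons_le_oi (j : ℕ) : ∀ (L : List ℕ) (a : ℕ), a ≤ j → (∀ b ∈ L, a ≤ b) →
    L.Pairwise (· ≤ ·) → ∀ k, (a :: L).getD k 0 ≤ (L.orderedInsert (· ≤ ·) j).getD k 0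
  | [], a, haj, _, _, k => by
    cases k with
    | zero => simpa [List.orderedInsert] using haj
    | succ k => simp [List.orderedInsert]
  | b :: L', a, haj, hL, hs, k => by
    by_cases hjb : j ≤ b
    · rw [List.orderedInsert_cons_of_le _ _ hjb]
      cases k with
      | zero => simpa using haj
      | succ k => simp
    · show (a :: b :: L').getD k 0 ≤ (if j ≤ b then _ else b :: L'.orderedInsert (· ≤ ·) j).getD k 0
      rw [if_neg hjb]
      cases k with
      | zero => simpa using hL b (by simp)
      | succ k =>
        simpa using aux_cons_le_oi j L' b (le_of_not_ge hjb)
          (fun c hc => List.rel_of_pairwise_cons hs hc) hs.of_cons k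

private lemma aux_oi_mono (i j : ℕ) (hij : i ≤ j) : ∀ (L : List ℕ), L.Pairwise (· ≤ ·) →
    ∀ k, (L.orderedInsert (· ≤ ·) i).getD k 0 ≤ (L.orderedInsert (· ≤ ·) j).getD k 0
  | [], _, k => by
    cases k with
    | zero => simpa [List.orderedInsert] using hij
    | succ k => simp [List.orderedInsert]
  | a :: L', hs, k => by
    by_cases hia : i ≤ a
    · rw [List.orderedInsert_cons_of_le _ _ hia]
      by_cases hja : j ≤ a
      · rw [List.orderedInsert_cons_of_le _ _ hja]
        cases k with
        | zero => simpa using hij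
        | succ k => simp
      · show (i :: a :: L').getD k 0 ≤ (if j ≤ a then _ else a :: L'.orderedInsert (· ≤ ·) j).getD k 0
        rw [if_neg hja]
        cases k with
        | zero => simpa using hia
        | succ k =>
          simpa using aux_cons_le_oi j L' a (le_of_not_ge hja)
            (fun c hc => List.rel_of_pairwise_cons hs hc) hs.of_cons k
    · have hja : ¬ j ≤ a := fun h => hia (hij.trans h)
      show (if i ≤ a then _ else a :: L'.orderedInsert (· ≤ ·) i).getD k 0 ≤
           (if j ≤ a then _ else a :: L'.orderedInsert (· ≤ ·) j).getD k 0
      rw [if_neg hia, if_neg hja]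
      cases k with
      | zero => simp
      | succ k => simpa using aux_oi_mono i j hij L' hs.of_cons k

private lemma sort_insert_eq {i : ℕ} {A : Finset ℕ} (h : i ∉ A) :
    Finset.sort (insert i A) (· ≤ ·) = (Finset.sort A (· ≤ ·)).orderedInsert (· ≤ ·) i := by
  refine List.Perm.eq_of_pairwise' (r := (· ≤ ·)) (Finset.pairwise_sort _ _)
    ((Finset.pairwise_sort _ _).orderedInsert _ _) ?_
  have p1 : List.Perm (Finset.sort (insert i A) (· ≤ ·)) ((insert i A).toList) :=
    Finset.sort_perm_toList _ _
  have p2 : List.Perm ((insert i A).toList) (i :: A.toList) := Finset.toList_insert h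
  have p3 : List.Perm (i :: A.toList) (i :: Finset.sort A (· ≤ ·)) :=
    List.Perm.cons _ (Finset.sort_perm_toList _ _).symm
  have p4 : List.Perm ((Finset.sort A (· ≤ ·)).orderedInsert (· ≤ ·) i)
      (i :: Finset.sort A (· ≤ ·)) := List.perm_orderedInsert _ _ _
  exact ((p1.trans p2).trans p3).trans p4.symm

open Finset

private lemma domBelow_insert {i j : ℕ} (hij : i ≤ j) {A : Finset ℕ} (hiA : i ∉ A) (hjA : j ∉ A) :
    domBelow (insert i A) (insert j A) := by
  constructor
  · rw [card_insert_of_notMem hiA, card_insert_of_notMem hjA]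
  · intro k
    rw [sort_insert_eq hiA, sort_insert_eq hjA]
    exact aux_oi_mono i j hij _ (Finset.pairwise_sort _ _) k

private lemma mem_of_compressed {E : Finset (Finset ℕ)} (hlc : leftCompressed E) {i j : ℕ}
    (h1 : 1 ≤ i) (hij : i ≤ j) {A : Finset ℕ} (hiA : i ∉ A) (hjA : j ∉ A)
    (hApos : ∀ a ∈ A, 1 ≤ a) (hmem : insert j A ∈ E) : insert i A ∈ E := by
  refine hlc _ hmem _ ?_ (domBelow_insert hij hiA hjA)
  intro a ha
  rcases Finset.mem_insert.mp ha with h | h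
  · exact h ▸ h1
  · exact hApos a h

private lemma simplex_le_one {n : ℕ} {x : ℕ → ℝ} (h : simplexOn n x) (i : ℕ) : x i ≤ 1 := by
  obtain ⟨h0, hs, hz⟩ := h
  by_cases hi : i ∈ Finset.Icc 1 n
  · rw [← hs]
    exact Finset.single_le_sum (fun j _ => h0 j) hi
  · rw [hz i hi]; norm_num

private lemma prod_x_nonneg {x : ℕ → ℝ} (h0 : ∀ i, 0 ≤ x i) (A : Finset ℕ) :
    0 ≤ ∏ i ∈ A, x i := Finset.prod_nonneg fun i _ => h0 i

private lemma lagF_le_card {n : ℕ} {E : Finset (Finset ℕ)} {x : ℕ → ℝ} (h : simplexOn n x) :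
    lagF E x ≤ E.card := by
  have : ∀ e ∈ E, ∏ i ∈ e, x i ≤ 1 := fun e _ =>
    Finset.prod_le_one (fun i _ => h.1 i) (fun i _ => simplex_le_one h i)
  calc lagF E x ≤ ∑ _e ∈ E, (1:ℝ) := Finset.sum_le_sum this
  _ = E.card := by simp

private lemma bddAbove_val (n : ℕ) (E : Finset (Finset ℕ)) :
    BddAbove {v : ℝ | ∃ x : ℕ → ℝ, simplexOn n x ∧ v = lagF E x} := by
  refine ⟨E.card, fun v hv => ?_⟩
  obtain ⟨x, hx, rfl⟩ := hv
  exact lagF_le_card hx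

private lemma exists_simplexOn {n : ℕ} (hn : 1 ≤ n) : ∃ x : ℕ → ℝ, simplexOn n x := by
  refine ⟨fun i => if i = 1 then 1 else 0, fun i => by positivity, ?_, fun i hi => ?_⟩
  · rw [Finset.sum_ite_eq' (Finset.Icc 1 n) 1 (fun _ => (1:ℝ))]
    simp [hn]
  · have : i ≠ 1 := by
      rintro rfl
      exact hi (Finset.mem_Icc.mpr ⟨le_refl _, hn⟩)
    simp [this]

private lemma le_lagr {n : ℕ} {E : Finset (Finset ℕ)} {x : ℕ → ℝ} (h : simplexOn n x) :
    lagF E x ≤ lagr n E := le_csSup (bddAbove_val n E) ⟨x, h, rfl⟩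

private lemma lagr_le {n : ℕ} {E : Finset (Finset ℕ)} {c : ℝ} (hn : 1 ≤ n)
    (h : ∀ x : ℕ → ℝ, simplexOn n x → lagF E x ≤ c) : lagr n E ≤ c := by
  apply csSup_le
  · obtain ⟨x, hx⟩ := exists_simplexOn (n := n) hn
    exact ⟨lagF E x, x, hx, rfl⟩
  · rintro v ⟨x, hx, rfl⟩
    exact h x hx

open Finset

private lemma simplex_isCompact (n : ℕ) : IsCompact {x : ℕ → ℝ | simplexOn n x} := by
  have hsub : {x : ℕ → ℝ | simplexOn n x} ⊆ Set.pi Set.univ (fun _ : ℕ => Set.Icc (0:ℝ) 1) := by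
    intro x hx i _
    exact ⟨hx.1 i, simplex_le_one hx i⟩
  have hclosed : IsClosed {x : ℕ → ℝ | simplexOn n x} := by
    have : {x : ℕ → ℝ | simplexOn n x} =
        (⋂ i : ℕ, {x : ℕ → ℝ | 0 ≤ x i}) ∩
        ({x : ℕ → ℝ | ∑ i ∈ Finset.Icc 1 n, x i = 1} ∩
        (⋂ i : ℕ, ⋂ _ : i ∉ Finset.Icc 1 n, {x : ℕ → ℝ | x i = 0})) := by
      ext x
      simp only [simplexOn, Set.mem_inter_iff, Set.mem_iInter, Set.mem_setOf_eq]
    rw [this]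
    refine IsClosed.inter (isClosed_iInter fun i =>
        isClosed_le continuous_const (continuous_apply i)) (IsClosed.inter ?_ ?_)
    · exact isClosed_eq (continuous_finset_sum _ fun i _ => continuous_apply i) continuous_const
    · exact isClosed_iInter fun i => isClosed_iInter fun _ =>
        isClosed_eq (continuous_apply i) continuous_const
  exact IsCompact.of_isClosed_subset (isCompact_univ_pi fun _ => isCompact_Icc) hclosed hsub

private lemma lagF_continuous (E : Finset (Finset ℕ)) : Continuous fun x : ℕ → ℝ => lagF E x :=
  continuous_finset_sum _ fun e _ => continuous_finset_prod _ fun i _ => continuous_apply i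

private lemma exists_optimal {n : ℕ} (hn : 1 ≤ n) (E : Finset (Finset ℕ)) :
    ∃ x : ℕ → ℝ, simplexOn n x ∧ lagF E x = lagr n E := by
  obtain ⟨x0, hx0⟩ := exists_simplexOn (n := n) hn
  obtain ⟨x, hx, hmax⟩ := (simplex_isCompact n).exists_isMaxOn ⟨x0, hx0⟩
    ((lagF_continuous E).continuousOn)
  refine ⟨x, hx, le_antisymm (le_lagr hx) (lagr_le hn fun y hy => hmax hy)⟩

open Finset Function

private lemma lagF_update_expand (E : Finset (Finset ℕ)) (x : ℕ → ℝ) {i j : ℕ} (hij : i ≠ j)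
    (t : ℝ) :
    lagF E (update (update x i (x i + t)) j (x j - t)) =
      lagF E x
      + t * ((∑ e ∈ E.filter fun e => i ∈ e ∧ j ∉ e, ∏ v ∈ e.erase i, x v)
           - (∑ e ∈ E.filter fun e => j ∈ e ∧ i ∉ e, ∏ v ∈ e.erase j, x v))
      + (t * (x j - x i) - t^2) *
          (∑ e ∈ E.filter fun e => i ∈ e ∧ j ∈ e, ∏ v ∈ (e.erase i).erase j, x v) := by
  classical
  set y := update (update x i (x i + t)) j (x j - t) with hy
  have hyi : y i = x i + t := by rw [hy, update_of_ne hij, update_self]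
  have hyj : y j = x j - t := by rw [hy, update_self]
  have hyo : ∀ v, v ≠ i → v ≠ j → y v = x v := fun v hvi hvj => by
    rw [hy, update_of_ne hvj, update_of_ne hvi]
  have key : ∀ e ∈ E, ∏ v ∈ e, y v = ∏ v ∈ e, x v
      + (if i ∈ e ∧ j ∉ e then t * ∏ v ∈ e.erase i, x v else 0)
      + (if j ∈ e ∧ i ∉ e then -t * ∏ v ∈ e.erase j, x v else 0)
      + (if i ∈ e ∧ j ∈ e then (t * (x j - x i) - t^2) * ∏ v ∈ (e.erase i).erase j, x v
         else 0) := by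
    intro e _
    by_cases hi : i ∈ e <;> by_cases hj : j ∈ e
    · -- both
      have hj' : j ∈ e.erase i := Finset.mem_erase.mpr ⟨Ne.symm hij, hj⟩
      have hprod : ∀ v ∈ (e.erase i).erase j, y v = x v := fun v hv => by
        have hvj : v ≠ j := (Finset.mem_erase.mp hv).1
        have hvi : v ≠ i := (Finset.mem_erase.mp (Finset.mem_erase.mp hv).2).1
        exact hyo v hvi hvj
      have e1 : ∏ v ∈ e, y v = y i * (y j * ∏ v ∈ (e.erase i).erase j, x v) := by
        rw [← Finset.prod_congr rfl hprod, Finset.mul_prod_erase _ y hj',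
          Finset.mul_prod_erase _ y hi]
      have e2 : ∏ v ∈ e, x v = x i * (x j * ∏ v ∈ (e.erase i).erase j, x v) := by
        rw [Finset.mul_prod_erase _ x hj', Finset.mul_prod_erase _ x hi]
      rw [e1, e2, hyi, hyj, if_neg (fun h => h.2 hj), if_neg (fun h => h.2 hi), if_pos ⟨hi, hj⟩]
      ring
    · -- i only
      have hprod : ∀ v ∈ e.erase i, y v = x v := fun v hv => by
        have hvi : v ≠ i := (Finset.mem_erase.mp hv).1
        have hvj : v ≠ j := fun h => hj (h ▸ (Finset.mem_erase.mp hv).2)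
        exact hyo v hvi hvj
      have e1 : ∏ v ∈ e, y v = y i * ∏ v ∈ e.erase i, x v := by
        rw [← Finset.prod_congr rfl hprod, Finset.mul_prod_erase _ y hi]
      have e2 : ∏ v ∈ e, x v = x i * ∏ v ∈ e.erase i, x v := by
        rw [Finset.mul_prod_erase _ x hi]
      rw [e1, e2, hyi, if_pos ⟨hi, hj⟩, if_neg (fun h => h.2 hi), if_neg (fun h => hj h.2)]
      ring
    · -- j only
      have hprod : ∀ v ∈ e.erase j, y v = x v := fun v hv => by
        have hvj : v ≠ j := (Finset.mem_erase.mp hv).1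
        have hvi : v ≠ i := fun h => hi (h ▸ (Finset.mem_erase.mp hv).2)
        exact hyo v hvi hvj
      have e1 : ∏ v ∈ e, y v = y j * ∏ v ∈ e.erase j, x v := by
        rw [← Finset.prod_congr rfl hprod, Finset.mul_prod_erase _ y hj]
      have e2 : ∏ v ∈ e, x v = x j * ∏ v ∈ e.erase j, x v := by
        rw [Finset.mul_prod_erase _ x hj]
      rw [e1, e2, hyj, if_neg (fun h => hi h.1), if_pos ⟨hj, hi⟩, if_neg (fun h => hi h.1)]
      ring
    · -- neither
      have hprod : ∀ v ∈ e, y v = x v := fun v hv => by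
        refine hyo v (fun h => hi (h ▸ hv)) (fun h => hj (h ▸ hv))
      rw [Finset.prod_congr rfl hprod, if_neg (fun h => hi h.1), if_neg (fun h => hj h.1),
        if_neg (fun h => hi h.1)]
      ring
  rw [lagF, Finset.sum_congr rfl key]
  rw [Finset.sum_add_distrib, Finset.sum_add_distrib, Finset.sum_add_distrib]
  rw [← Finset.sum_filter, ← Finset.sum_filter, ← Finset.sum_filter]
  rw [← Finset.mul_sum, ← Finset.mul_sum, ← Finset.mul_sum]
  show lagF E x + _ + _ + _ = _
  ring

open Finset Function

private lemma nonpos_of_forall_le {a c δ : ℝ} (hδ : 0 < δ) (hc : 0 ≤ c)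
    (h : ∀ t : ℝ, 0 < t → t ≤ δ → a ≤ t * c) : a ≤ 0 := by
  by_contra ha
  push_neg at ha
  rcases eq_or_lt_of_le hc with hc0 | hc0
  · have := h δ hδ le_rfl
    rw [← hc0] at this
    nlinarith
  · have ht : 0 < min δ (a / (2 * c)) := lt_min hδ (by positivity)
    have := h _ ht (min_le_left _ _)
    have h2 : min δ (a / (2 * c)) * c ≤ (a / (2 * c)) * c :=
      mul_le_mul_of_nonneg_right (min_le_right _ _) hc
    have h3 : (a / (2 * c)) * c = a / 2 := by field_simp
    nlinarith

private lemma sum_mul_update2 (s : Finset ℕ) {i j : ℕ} (hi : i ∈ s) (hj : j ∈ s) (hij : i ≠ j)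
    (x : ℕ → ℝ) (a b : ℝ) (c : ℕ → ℝ) :
    ∑ v ∈ s, c v * (update (update x i a) j b) v
      = (∑ v ∈ s, c v * x v) + c i * (a - x i) + c j * (b - x j) := by
  classical
  set y := update (update x i a) j b with hy
  have hyi : y i = a := by rw [hy, update_of_ne hij, update_self]
  have hyj : y j = b := by rw [hy, update_self]
  have hyo : ∀ v, v ≠ i → v ≠ j → y v = x v := fun v hvi hvj => by
    rw [hy, update_of_ne hvj, update_of_ne hvi]
  have hi' : i ∈ s.erase j := Finset.mem_erase.mpr ⟨hij, hi⟩
  have key : ∀ f : ℕ → ℝ, ∑ v ∈ s, c v * f v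
      = c j * f j + (c i * f i + ∑ v ∈ (s.erase j).erase i, c v * f v) := by
    intro f
    rw [← Finset.add_sum_erase _ _ hj, ← Finset.add_sum_erase _ _ hi']
  rw [key y, key x]
  have : ∑ v ∈ (s.erase j).erase i, c v * y v = ∑ v ∈ (s.erase j).erase i, c v * x v := by
    refine Finset.sum_congr rfl fun v hv => ?_
    rw [hyo v (Finset.mem_erase.mp hv).1 (Finset.mem_erase.mp (Finset.mem_erase.mp hv).2).1]
  rw [this, hyi, hyj]
  ring

private lemma simplexOn_update {n : ℕ} {x : ℕ → ℝ} (h : simplexOn n x) {i j : ℕ}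
    (hi : i ∈ Finset.Icc 1 n) (hj : j ∈ Finset.Icc 1 n) (hij : i ≠ j) {t : ℝ}
    (h1 : -(x i) ≤ t) (h2 : t ≤ x j) :
    simplexOn n (update (update x i (x i + t)) j (x j - t)) := by
  set y := update (update x i (x i + t)) j (x j - t) with hy
  have hyi : y i = x i + t := by rw [hy, update_of_ne hij, update_self]
  have hyj : y j = x j - t := by rw [hy, update_self]
  have hyo : ∀ v, v ≠ i → v ≠ j → y v = x v := fun v hvi hvj => by
    rw [hy, update_of_ne hvj, update_of_ne hvi]
  refine ⟨fun v => ?_, ?_, fun v hv => ?_⟩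
  · by_cases hvj : v = j
    · rw [hvj, hyj]; linarith
    · by_cases hvi : v = i
      · rw [hvi, hyi]; linarith
      · rw [hyo v hvi hvj]; exact h.1 v
  · have := sum_mul_update2 (Finset.Icc 1 n) hi hj hij x (x i + t) (x j - t) (fun _ => 1)
    simp only [one_mul] at this
    rw [this, h.2.1]
    ring
  · have hvi : v ≠ i := fun hh => hv (hh ▸ hi)
    have hvj : v ≠ j := fun hh => hv (hh ▸ hj)
    rw [hyo v hvi hvj]
    exact h.2.2 v hv

private lemma stationarity {n : ℕ} {E : Finset (Finset ℕ)} {x : ℕ → ℝ} (hx : simplexOn n x)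
    (hopt : ∀ y : ℕ → ℝ, simplexOn n y → lagF E y ≤ lagF E x) {i j : ℕ}
    (hi : i ∈ Finset.Icc 1 n) (hj : j ∈ Finset.Icc 1 n) (hij : i ≠ j)
    (hxi : 0 < x i) (hxj : 0 < x j) :
    (∑ e ∈ E.filter fun e => i ∈ e ∧ j ∉ e, ∏ v ∈ e.erase i, x v)
      - (∑ e ∈ E.filter fun e => j ∈ e ∧ i ∉ e, ∏ v ∈ e.erase j, x v)
      = (x i - x j) *
        (∑ e ∈ E.filter fun e => i ∈ e ∧ j ∈ e, ∏ v ∈ (e.erase i).erase j, x v) := by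
  set Ni := ∑ e ∈ E.filter fun e => i ∈ e ∧ j ∉ e, ∏ v ∈ e.erase i, x v with hNi
  set Nj := ∑ e ∈ E.filter fun e => j ∈ e ∧ i ∉ e, ∏ v ∈ e.erase j, x v with hNj
  set C := ∑ e ∈ E.filter fun e => i ∈ e ∧ j ∈ e, ∏ v ∈ (e.erase i).erase j, x v with hC
  have hC0 : 0 ≤ C := Finset.sum_nonneg fun e _ => prod_x_nonneg hx.1 _
  set α := Ni - Nj - (x i - x j) * C with hα
  have key : ∀ t : ℝ, -(x i) ≤ t → t ≤ x j → t * α - t^2 * C ≤ 0 := by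
    intro t ht1 ht2
    have hs := simplexOn_update hx hi hj hij ht1 ht2
    have := hopt _ hs
    rw [lagF_update_expand E x hij t] at this
    rw [hα]
    nlinarith [this]
  set δ := min (x i) (x j) with hδ
  have hδ0 : 0 < δ := lt_min hxi hxj
  have ha1 : α ≤ 0 := by
    refine nonpos_of_forall_le hδ0 hC0 fun t ht1 ht2 => ?_
    have := key t (by linarith) (le_trans ht2 (min_le_right _ _))
    have ht : 0 < t := ht1
    nlinarith
  have ha2 : -α ≤ 0 := by
    refine nonpos_of_forall_le hδ0 hC0 fun t ht1 ht2 => ?_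
    have := key (-t) (by have := le_trans ht2 (min_le_left _ _); linarith) (by linarith)
    nlinarith
  have : α = 0 := le_antisymm ha1 (by linarith)
  rw [hα] at this
  linarith

open Finset Function

private lemma sum_comp_le {s t : Finset (Finset ℕ)} (φ : Finset ℕ → Finset ℕ)
    (hinj : Set.InjOn φ s) (hsub : ∀ a ∈ s, φ a ∈ t) (f : Finset ℕ → ℝ)
    (hf : ∀ b ∈ t, 0 ≤ f b) : ∑ a ∈ s, f (φ a) ≤ ∑ b ∈ t, f b := by
  classical
  rw [← Finset.sum_image (fun a ha b hb hab => hinj ha hb hab)]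
  exact Finset.sum_le_sum_of_subset_of_nonneg
    (fun b hb => by
      obtain ⟨a, ha, rfl⟩ := Finset.mem_image.mp hb
      exact hsub a ha)
    (fun b hb _ => hf b hb)

private lemma mySwap_le {r l : ℕ} {E : Finset (Finset ℕ)} (hG : isRGraph r l E)
    (hlc : leftCompressed E) {x : ℕ → ℝ} (hx0 : ∀ v, 0 ≤ x v) {i j : ℕ}
    (h1 : 1 ≤ i) (hij : i ≤ j) :
    (∑ e ∈ E.filter fun e => j ∈ e ∧ i ∉ e, ∏ v ∈ e.erase j, x v)
      ≤ ∑ e ∈ E.filter fun e => i ∈ e ∧ j ∉ e, ∏ v ∈ e.erase i, x v := by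
  classical
  have step : ∀ e ∈ E.filter fun e => j ∈ e ∧ i ∉ e,
      insert i (e.erase j) ∈ E.filter fun e => i ∈ e ∧ j ∉ e := by
    intro e he
    rw [Finset.mem_filter] at he
    obtain ⟨heE, hje, hie⟩ := he
    have hiej : i ∉ e.erase j := fun h => hie (Finset.mem_of_mem_erase h)
    have hjej : j ∉ e.erase j := Finset.notMem_erase _ _
    have hpos : ∀ a ∈ e.erase j, 1 ≤ a := fun a ha =>
      (Finset.mem_Icc.mp ((hG e heE).2 (Finset.mem_of_mem_erase ha))).1
    have hins : insert j (e.erase j) ∈ E := by rw [Finset.insert_erase hje]; exact heE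
    refine Finset.mem_filter.mpr ⟨mem_of_compressed hlc h1 hij hiej hjej hpos hins,
      Finset.mem_insert_self _ _, ?_⟩
    intro hmem
    rcases Finset.mem_insert.mp hmem with h | h
    · exact hie (h ▸ hje)
    · exact hjej h
  have hval : ∀ e ∈ E.filter fun e => j ∈ e ∧ i ∉ e,
      ∏ v ∈ e.erase j, x v = ∏ v ∈ (insert i (e.erase j)).erase i, x v := by
    intro e he
    rw [Finset.mem_filter] at he
    have hiej : i ∉ e.erase j := fun h => he.2.2 (Finset.mem_of_mem_erase h)
    rw [Finset.erase_insert hiej]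
  calc (∑ e ∈ E.filter fun e => j ∈ e ∧ i ∉ e, ∏ v ∈ e.erase j, x v)
      = ∑ e ∈ E.filter fun e => j ∈ e ∧ i ∉ e,
          ∏ v ∈ (insert i (e.erase j)).erase i, x v := Finset.sum_congr rfl hval
    _ ≤ _ := by
        refine sum_comp_le (fun e => insert i (e.erase j)) ?_ step
          (fun e => ∏ v ∈ e.erase i, x v) (fun b _ => prod_x_nonneg hx0 _)
        intro e he e' he' heq
        simp only at heq
        rw [Finset.mem_coe, Finset.mem_filter] at he he'
        have h1' : (insert i (e.erase j)).erase i = (insert i (e'.erase j)).erase i := by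
          rw [heq]
        rw [Finset.erase_insert (fun h => he.2.2 (Finset.mem_of_mem_erase h)),
          Finset.erase_insert (fun h => he'.2.2 (Finset.mem_of_mem_erase h))] at h1'
        have : insert j (e.erase j) = insert j (e'.erase j) := by rw [h1']
        rwa [Finset.insert_erase he.2.1, Finset.insert_erase he'.2.1] at this

private lemma exists_optimal_mono {r l : ℕ} {E : Finset (Finset ℕ)} (hl1 : 1 ≤ l)
    (hG : isRGraph r l E) (hlc : leftCompressed E) :
    ∃ x : ℕ → ℝ, simplexOn l x ∧ lagF E x = lagr l E ∧
      (∀ y : ℕ → ℝ, simplexOn l y → lagF E y ≤ lagF E x) ∧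
      ∀ i j : ℕ, i ∈ Finset.Icc 1 l → j ∈ Finset.Icc 1 l → i ≤ j → x j ≤ x i := by
  classical
  set M : Set (ℕ → ℝ) := {x | simplexOn l x} ∩ {x | lagF E x = lagr l E} with hM
  have hMc : IsCompact M := (simplex_isCompact l).inter_right
    (isClosed_eq (lagF_continuous E) continuous_const)
  have hMne : M.Nonempty := by
    obtain ⟨x, hx1, hx2⟩ := exists_optimal hl1 E
    exact ⟨x, hx1, hx2⟩
  have hΦ : Continuous fun x : ℕ → ℝ => ∑ v ∈ Finset.Icc 1 l, (v : ℝ) * x v :=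
    continuous_finset_sum _ fun v _ => continuous_const.mul (continuous_apply v)
  obtain ⟨x, hxM, hmin⟩ := hMc.exists_isMinOn hMne hΦ.continuousOn
  obtain ⟨hx, hlag⟩ := hxM
  have hopt : ∀ y : ℕ → ℝ, simplexOn l y → lagF E y ≤ lagF E x := fun y hy =>
    (le_lagr hy).trans_eq hlag.symm
  refine ⟨x, hx, hlag, hopt, ?_⟩
  intro i j hi hj hij
  by_contra hcon
  push_neg at hcon
  have hijne : i ≠ j := fun h => by rw [h] at hcon; exact lt_irrefl _ hcon
  have hij' : i < j := lt_of_le_of_ne hij hijne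
  set t := x j - x i with ht
  have ht0 : 0 < t := by rw [ht]; linarith
  set y := update (update x i (x i + t)) j (x j - t) with hy
  have hys : simplexOn l y := simplexOn_update hx hi hj hijne
    (by have := hx.1 i; linarith) (by have := hx.1 i; simp only [ht]; linarith)
  have hexp := lagF_update_expand E x hijne t
  rw [← hy] at hexp
  have hcoef : (t * (x j - x i) - t^2) = 0 := by rw [ht]; ring
  rw [hcoef, zero_mul, add_zero] at hexp
  have hswap := mySwap_le hG hlc hx.1 (Finset.mem_Icc.mp hi).1 hij
  have hge : lagF E x ≤ lagF E y := by rw [hexp]; nlinarith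
  have hyM : y ∈ M := ⟨hys, le_antisymm (le_lagr hys) (by rw [← hlag]; exact hge)⟩
  have hΦy := hmin hyM
  have : ∑ v ∈ Finset.Icc 1 l, (v:ℝ) * y v
      = (∑ v ∈ Finset.Icc 1 l, (v:ℝ) * x v) + (i:ℝ) * t + (j:ℝ) * (-t) := by
    rw [hy, sum_mul_update2 _ hi hj hijne]
    ring
  have hlt : ((i:ℝ)) < (j:ℝ) := by exact_mod_cast hij'
  have hle : ∑ v ∈ Finset.Icc 1 l, (v:ℝ) * x v ≤ ∑ v ∈ Finset.Icc 1 l, (v:ℝ) * y v := hΦy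
  rw [this] at hle
  nlinarith

open Finset Function

/-- `S i j`: (r-1)-subsets A of [l] avoiding i,j with A∪{i} ∈ E. -/
private def NS (r l : ℕ) (E : Finset (Finset ℕ)) (i j : ℕ) : Finset (Finset ℕ) :=
  ((Finset.Icc 1 l).powersetCard (r-1)).filter fun A => i ∉ A ∧ j ∉ A ∧ insert i A ∈ E

private def CM (r l : ℕ) (E : Finset (Finset ℕ)) (i j : ℕ) : Finset (Finset ℕ) :=
  ((Finset.Icc 1 l).powersetCard (r-2)).filter fun B => i ∉ B ∧ j ∉ B ∧ insert i (insert j B) ∈ E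

private lemma sumN_eq {r l : ℕ} {E : Finset (Finset ℕ)} (hG : isRGraph r l E) {i j : ℕ}
    (hij : i ≠ j) (x : ℕ → ℝ) :
    ∑ e ∈ E.filter (fun e => i ∈ e ∧ j ∉ e), ∏ v ∈ e.erase i, x v
      = ∑ A ∈ NS r l E i j, ∏ v ∈ A, x v := by
  classical
  refine Finset.sum_bij' (fun e _ => e.erase i) (fun A _ => insert i A) ?_ ?_ ?_ ?_ ?_
  · intro e he
    rw [Finset.mem_filter] at he
    obtain ⟨heE, hie, hje⟩ := he
    refine Finset.mem_filter.mpr ⟨Finset.mem_powersetCard.mpr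
      ⟨(Finset.erase_subset _ _).trans (hG e heE).2, by rw [Finset.card_erase_of_mem hie, (hG e heE).1]⟩,
      Finset.notMem_erase _ _, fun h => hje (Finset.mem_of_mem_erase h), ?_⟩
    rw [Finset.insert_erase hie]
    exact heE
  · intro A hA
    rw [NS, Finset.mem_filter] at hA
    obtain ⟨_, hiA, hjA, hins⟩ := hA
    exact Finset.mem_filter.mpr ⟨hins, Finset.mem_insert_self _ _,
      fun h => (Finset.mem_insert.mp h).elim (fun hh => hij hh.symm) hjA⟩
  · intro e he
    rw [Finset.mem_filter] at he
    exact Finset.insert_erase he.2.1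
  · intro A hA
    rw [NS, Finset.mem_filter] at hA
    exact Finset.erase_insert hA.2.1
  · intro e _
    rfl

private lemma sumC_eq {r l : ℕ} {E : Finset (Finset ℕ)} (hG : isRGraph r l E) {i j : ℕ}
    (hij : i ≠ j) (x : ℕ → ℝ) :
    ∑ e ∈ E.filter (fun e => i ∈ e ∧ j ∈ e), ∏ v ∈ (e.erase i).erase j, x v
      = ∑ B ∈ CM r l E i j, ∏ v ∈ B, x v := by
  classical
  refine Finset.sum_bij' (fun e _ => (e.erase i).erase j) (fun B _ => insert i (insert j B))
    ?_ ?_ ?_ ?_ ?_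
  · intro e he
    rw [Finset.mem_filter] at he
    obtain ⟨heE, hie, hje⟩ := he
    have hje' : j ∈ e.erase i := Finset.mem_erase.mpr ⟨fun h => hij h.symm, hje⟩
    refine Finset.mem_filter.mpr ⟨Finset.mem_powersetCard.mpr
      ⟨((Finset.erase_subset _ _).trans (Finset.erase_subset _ _)).trans (hG e heE).2, ?_⟩,
      fun h => (Finset.notMem_erase i e) (Finset.mem_of_mem_erase h),
      Finset.notMem_erase _ _, ?_⟩
    · rw [Finset.card_erase_of_mem hje', Finset.card_erase_of_mem hie, (hG e heE).1]
      omega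
    · rw [Finset.insert_erase hje', Finset.insert_erase hie]
      exact heE
  · intro B hB
    rw [CM, Finset.mem_filter] at hB
    obtain ⟨_, hiB, hjB, hins⟩ := hB
    refine Finset.mem_filter.mpr ⟨hins, Finset.mem_insert_self _ _, ?_⟩
    exact Finset.mem_insert.mpr (Or.inr (Finset.mem_insert_self _ _))
  · intro e he
    rw [Finset.mem_filter] at he
    obtain ⟨heE, hie, hje⟩ := he
    have hje' : j ∈ e.erase i := Finset.mem_erase.mpr ⟨fun h => hij h.symm, hje⟩
    show insert i (insert j ((e.erase i).erase j)) = e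
    rw [Finset.insert_erase hje', Finset.insert_erase hie]
  · intro B hB
    rw [CM, Finset.mem_filter] at hB
    obtain ⟨_, hiB, hjB, _⟩ := hB
    show ((insert i (insert j B)).erase i).erase j = B
    have h1 : i ∉ insert j B := fun h => (Finset.mem_insert.mp h).elim (fun hh => hij hh) hiB
    rw [Finset.erase_insert h1]
    exact Finset.erase_insert hjB
  · intro e _
    rfl

/-- stationarity in powerset form, with the `j\i` part removed by compression. -/
private lemma stationarity' {r l : ℕ} {E : Finset (Finset ℕ)} (hG : isRGraph r l E)
    (hlc : leftCompressed E) {x : ℕ → ℝ} (hx : simplexOn l x)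
    (hopt : ∀ y : ℕ → ℝ, simplexOn l y → lagF E y ≤ lagF E x) {i j : ℕ}
    (hi : i ∈ Finset.Icc 1 l) (hj : j ∈ Finset.Icc 1 l) (hij : i < j)
    (hxi : 0 < x i) (hxj : 0 < x j) :
    ∑ A ∈ (NS r l E i j).filter (fun A => insert j A ∉ E), ∏ v ∈ A, x v
      = (x i - x j) * ∑ B ∈ CM r l E i j, ∏ v ∈ B, x v := by
  classical
  have hst := stationarity hx hopt hi hj hij.ne hxi hxj
  rw [sumN_eq hG hij.ne x, sumN_eq hG hij.ne.symm x, sumC_eq hG hij.ne x] at hst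
  have hsplit : ∀ (i' j' : ℕ), ∑ A ∈ NS r l E i' j', ∏ v ∈ A, x v
      = (∑ A ∈ (NS r l E i' j').filter (fun A => insert j' A ∈ E), ∏ v ∈ A, x v)
      + ∑ A ∈ (NS r l E i' j').filter (fun A => insert j' A ∉ E), ∏ v ∈ A, x v := by
    intro i' j'
    exact (Finset.sum_filter_add_sum_filter_not _ _ _).symm
  rw [hsplit i j, hsplit j i] at hst
  have hcom : (NS r l E i j).filter (fun A => insert j A ∈ E)
      = (NS r l E j i).filter (fun A => insert i A ∈ E) := by
    ext A
    simp only [NS, Finset.mem_filter, Finset.mem_powersetCard]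
    tauto
  have hemp : (NS r l E j i).filter (fun A => insert i A ∉ E) = ∅ := by
    rw [Finset.eq_empty_iff_forall_notMem]
    intro A hA
    rw [Finset.mem_filter, NS, Finset.mem_filter] at hA
    obtain ⟨⟨hAp, hjA, hiA, hins⟩, hnot⟩ := hA
    refine hnot (mem_of_compressed hlc (Finset.mem_Icc.mp hi).1 hij.le hiA hjA ?_ hins)
    intro a ha
    exact (Finset.mem_Icc.mp ((Finset.mem_powersetCard.mp hAp).1 ha)).1
  rw [hcom, hemp, Finset.sum_empty, add_zero] at hst
  linarith

open Finset Function

private lemma Icc_insert_top {l : ℕ} (hl : 1 ≤ l) :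
    Finset.Icc 1 l = insert l (Finset.Icc 1 (l-1)) := by
  ext v
  simp only [Finset.mem_Icc, Finset.mem_insert]
  omega

private lemma simplexOn_pred {l : ℕ} (hl : 2 ≤ l) {y : ℕ → ℝ} (hy : simplexOn l y)
    (hyl : y l = 0) : simplexOn (l-1) y := by
  have hnot : l ∉ Finset.Icc 1 (l-1) := by simp only [Finset.mem_Icc]; omega
  refine ⟨hy.1, ?_, fun v hv => ?_⟩
  · have := hy.2.1
    rw [Icc_insert_top (by omega), Finset.sum_insert hnot, hyl, zero_add] at this
    exact this
  · by_cases hvl : v = l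
    · rw [hvl]; exact hyl
    · refine hy.2.2 v (fun h => hv ?_)
      rw [Finset.mem_Icc] at h ⊢
      omega

private lemma lagF_vanish_top {r l : ℕ} {E : Finset (Finset ℕ)} (hl : 2 ≤ l)
    (hG : isRGraph r l E) (hclq : completeR r (l-1) ⊆ E) {y : ℕ → ℝ} (hy : simplexOn l y)
    (hyl : y l = 0) : lagF E y ≤ lagr (l-1) (completeR r (l-1)) := by
  classical
  have hfil : E.filter (fun e => l ∉ e) = completeR r (l-1) := by
    ext e
    simp only [Finset.mem_filter, completeR, Finset.mem_powersetCard]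
    constructor
    · rintro ⟨heE, hle⟩
      refine ⟨fun a ha => ?_, (hG e heE).1⟩
      have := Finset.mem_Icc.mp ((hG e heE).2 ha)
      rw [Finset.mem_Icc]
      have : a ≠ l := fun h => hle (h ▸ ha)
      omega
    · rintro ⟨hsub, hcard⟩
      have heE : e ∈ E := hclq (by rw [completeR, Finset.mem_powersetCard]; exact ⟨hsub, hcard⟩)
      refine ⟨heE, fun hle => ?_⟩
      have := Finset.mem_Icc.mp (hsub hle)
      omega
  have hsplit : lagF E y = ∑ e ∈ E.filter (fun e => l ∉ e), ∏ v ∈ e, y v := by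
    rw [lagF, ← Finset.sum_filter_add_sum_filter_not E (fun e => l ∉ e)]
    have : ∑ e ∈ E.filter (fun e => ¬ l ∉ e), ∏ v ∈ e, y v = 0 := by
      refine Finset.sum_eq_zero fun e he => ?_
      rw [Finset.mem_filter, not_not] at he
      exact Finset.prod_eq_zero he.2 hyl
    rw [this, add_zero]
  rw [hsplit, hfil]
  exact le_lagr (E := completeR r (l-1)) (simplexOn_pred hl hy hyl)

private lemma easy_dir {r l : ℕ} {E : Finset (Finset ℕ)} (hl : 2 ≤ l)
    (hclq : completeR r (l-1) ⊆ E) : lagr (l-1) (completeR r (l-1)) ≤ lagr l E := by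
  refine lagr_le (by omega) fun x hx => ?_
  have hxl : simplexOn l x := by
    have hnot : l ∉ Finset.Icc 1 (l-1) := by simp only [Finset.mem_Icc]; omega
    refine ⟨hx.1, ?_, fun v hv => hx.2.2 v (fun h => hv ?_)⟩
    · rw [Icc_insert_top (by omega), Finset.sum_insert hnot, hx.2.2 l hnot, zero_add]
      exact hx.2.1
    · rw [Finset.mem_Icc] at h ⊢
      omega
  calc lagF (completeR r (l-1)) x ≤ lagF E x :=
        Finset.sum_le_sum_of_subset_of_nonneg hclq (fun e _ _ => prod_x_nonneg hx.1 e)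
  _ ≤ lagr l E := le_lagr hxl

open Finset Function

private lemma bound_i {r l : ℕ} {E : Finset (Finset ℕ)} (hr : 3 ≤ r) (hl : r + 2 ≤ l)
    (hG : isRGraph r l E) (hlc : leftCompressed E) (hclq : completeR r (l-1) ⊆ E)
    {x : ℕ → ℝ} (hx : simplexOn l x)
    (hopt : ∀ y : ℕ → ℝ, simplexOn l y → lagF E y ≤ lagF E x)
    (hpos : ∀ i ∈ Finset.Icc 1 l, 0 < x i) {i : ℕ} (h1 : 1 ≤ i) (h2 : i ≤ l - 2) :
    x i ≤ x (l-1) + x l := by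
  classical
  have hclique : ∀ s : Finset ℕ, s ⊆ Finset.Icc 1 (l-1) → s.card = r → s ∈ E := fun s hs hc =>
    hclq (by rw [completeR, Finset.mem_powersetCard]; exact ⟨hs, hc⟩)
  have hi : i ∈ Finset.Icc 1 l := Finset.mem_Icc.mpr ⟨h1, by omega⟩
  have hj : l - 1 ∈ Finset.Icc 1 l := Finset.mem_Icc.mpr ⟨by omega, by omega⟩
  have hij : i < l - 1 := by omega
  have hst := stationarity' hG hlc hx hopt hi hj hij (hpos i hi) (hpos _ hj)
  set N := (NS r l E i (l-1)).filter (fun A => insert (l-1) A ∉ E) with hN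
  set C := ∑ B ∈ CM r l E i (l-1), ∏ v ∈ B, x v with hC
  -- every A in N contains l
  have hmemN : ∀ A ∈ N, (A ⊆ Finset.Icc 1 l ∧ A.card = r - 1 ∧ i ∉ A ∧ (l-1) ∉ A ∧
      insert i A ∈ E ∧ insert (l-1) A ∉ E) := by
    intro A hA
    rw [hN, Finset.mem_filter, NS, Finset.mem_filter, Finset.mem_powersetCard] at hA
    exact ⟨hA.1.1.1, hA.1.1.2, hA.1.2.1, hA.1.2.2.1, hA.1.2.2.2, hA.2⟩
  have hlmem : ∀ A ∈ N, l ∈ A := by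
    intro A hA
    obtain ⟨hsub, hcard, hiA, h1A, hins, hnot⟩ := hmemN A hA
    by_contra hlA
    refine hnot (hclique _ (fun a ha => ?_) ?_)
    · rcases Finset.mem_insert.mp ha with h | h
      · rw [h, Finset.mem_Icc]; omega
      · have := Finset.mem_Icc.mp (hsub h)
        have : a ≠ l := fun hh => hlA (hh ▸ h)
        rw [Finset.mem_Icc]; omega
    · rw [Finset.card_insert_of_notMem h1A, hcard]; omega
  -- erase l maps N into CM
  have hmap : ∀ A ∈ N, A.erase l ∈ CM r l E i (l-1) := by
    intro A hA
    obtain ⟨hsub, hcard, hiA, h1A, hins, hnot⟩ := hmemN A hA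
    have hlA := hlmem A hA
    rw [CM, Finset.mem_filter, Finset.mem_powersetCard]
    refine ⟨⟨(Finset.erase_subset _ _).trans hsub, by
      rw [Finset.card_erase_of_mem hlA, hcard]; omega⟩,
      fun h => hiA (Finset.mem_of_mem_erase h),
      fun h => h1A (Finset.mem_of_mem_erase h), ?_⟩
    refine hclique _ (fun a ha => ?_) ?_
    · rcases Finset.mem_insert.mp ha with h | h
      · rw [h, Finset.mem_Icc]; omega
      · rcases Finset.mem_insert.mp h with h' | h'
        · rw [h', Finset.mem_Icc]; omega
        · have h1 := Finset.mem_Icc.mp (hsub (Finset.mem_of_mem_erase h'))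
          have h2 : a ≠ l := (Finset.mem_erase.mp h').1
          rw [Finset.mem_Icc]; omega
    · have hinot : i ∉ insert (l-1) (A.erase l) := by
        intro h
        rcases Finset.mem_insert.mp h with h' | h'
        · omega
        · exact hiA (Finset.mem_of_mem_erase h')
      have h1not : (l-1) ∉ A.erase l := fun h => h1A (Finset.mem_of_mem_erase h)
      rw [Finset.card_insert_of_notMem hinot, Finset.card_insert_of_notMem h1not,
        Finset.card_erase_of_mem hlA, hcard]
      omega
  -- sum over N is at most x l * C
  have hNle : ∑ A ∈ N, ∏ v ∈ A, x v ≤ x l * C := by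
    have hval : ∀ A ∈ N, ∏ v ∈ A, x v = x l * ∏ v ∈ A.erase l, x v := fun A hA =>
      (Finset.mul_prod_erase A x (hlmem A hA)).symm
    rw [Finset.sum_congr rfl hval, ← Finset.mul_sum, hC]
    refine mul_le_mul_of_nonneg_left ?_ (hx.1 l)
    refine sum_comp_le (fun A => A.erase l) ?_ hmap _ (fun B _ => prod_x_nonneg hx.1 B)
    intro A hA A' hA' heq
    simp only at heq
    have : insert l (A.erase l) = insert l (A'.erase l) := by rw [heq]
    rwa [Finset.insert_erase (hlmem A hA), Finset.insert_erase (hlmem A' hA')] at this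
  -- C is positive
  have hCpos : 0 < C := by
    obtain ⟨B₀, hB₀sub, hB₀card⟩ := Finset.exists_subset_card_eq
      (s := (Finset.Icc 1 (l-2)) \ {i}) (n := r - 2) (by
        have h1 : (l:ℕ) - 2 + 1 - 1 = l - 2 := by omega
        have h2 := Finset.le_card_sdiff ({i} : Finset ℕ) (Finset.Icc 1 (l-2))
        rw [Nat.card_Icc] at h2
        simp only [Finset.card_singleton] at h2
        omega)
    have hB₀ : ∀ b ∈ B₀, 1 ≤ b ∧ b ≤ l - 2 ∧ b ≠ i := by
      intro b hb
      have := hB₀sub hb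
      rw [Finset.mem_sdiff, Finset.mem_Icc, Finset.mem_singleton] at this
      exact ⟨this.1.1, this.1.2, this.2⟩
    have hB₀CM : B₀ ∈ CM r l E i (l-1) := by
      rw [CM, Finset.mem_filter, Finset.mem_powersetCard]
      have h1not : (l-1) ∉ B₀ := fun h => by have := hB₀ _ h; omega
      have hinot : i ∉ B₀ := fun h => (hB₀ _ h).2.2 rfl
      refine ⟨⟨fun b hb => by have := hB₀ b hb; rw [Finset.mem_Icc]; omega, hB₀card⟩,
        hinot, h1not, ?_⟩
      refine hclique _ (fun a ha => ?_) ?_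
      · rcases Finset.mem_insert.mp ha with h | h
        · rw [h, Finset.mem_Icc]; omega
        · rcases Finset.mem_insert.mp h with h' | h'
          · rw [h', Finset.mem_Icc]; omega
          · have := hB₀ _ h'; rw [Finset.mem_Icc]; omega
      · have : i ∉ insert (l-1) B₀ := by
          intro h
          rcases Finset.mem_insert.mp h with h' | h'
          · omega
          · exact hinot h'
        rw [Finset.card_insert_of_notMem this, Finset.card_insert_of_notMem h1not, hB₀card]
        omega
    have hB₀pos : 0 < ∏ v ∈ B₀, x v := by
      refine Finset.prod_pos fun b hb => hpos b ?_
      have := hB₀ b hb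
      rw [Finset.mem_Icc]; omega
    rw [hC]
    calc (0:ℝ) < ∏ v ∈ B₀, x v := hB₀pos
    _ ≤ _ := Finset.single_le_sum (fun B _ => prod_x_nonneg hx.1 B) hB₀CM
  -- conclude
  rw [hst] at hNle
  have := (mul_le_mul_iff_left₀ hCpos).mp hNle
  linarith


open Finset Function

theorem leftCompressed_clique_lagrangian_eq (r l : ℕ) (E : Finset (Finset ℕ))
    (hr : 3 ≤ r) (hl : r + 2 ≤ l)
    (hG : isRGraph r l E) (hlc : leftCompressed E)
    (hclq : completeR r (l - 1) ⊆ E)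
    (hcount : 2 ^ (r - 3) * (link2 E (l - 1) l).card ≤
      (((Finset.Icc 1 (l - 2)).powersetCard (r - 1)) \ link E l).card) :
    lagr l E = lagr (l - 1) (completeR r (l - 1)) := by
  classical
  have hclique : ∀ s : Finset ℕ, s ⊆ Finset.Icc 1 (l-1) → s.card = r → s ∈ E := fun s hs hc =>
    hclq (by rw [completeR, Finset.mem_powersetCard]; exact ⟨hs, hc⟩)
  refine le_antisymm ?_ (easy_dir (by omega) hclq)
  obtain ⟨x, hx, hlag, hopt, hmono⟩ := exists_optimal_mono (by omega : 1 ≤ l) hG hlc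
  rw [← hlag]
  have hlmem : l ∈ Finset.Icc 1 l := Finset.mem_Icc.mpr ⟨by omega, le_refl l⟩
  have hl1mem : l - 1 ∈ Finset.Icc 1 l := Finset.mem_Icc.mpr ⟨by omega, by omega⟩
  by_cases hxl : x l = 0
  · exact lagF_vanish_top (by omega) hG hclq hx hxl
  -- x l > 0 : all weights positive
  have hxl0 : 0 < x l := lt_of_le_of_ne (hx.1 l) (Ne.symm hxl)
  have hpos : ∀ i ∈ Finset.Icc 1 l, 0 < x i := fun i hi =>
    lt_of_lt_of_le hxl0 (hmono i l hi hlmem (Finset.mem_Icc.mp hi).2)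
  have hne : (l:ℕ) - 1 ≠ l := by omega
  have hij : l - 1 < l := by omega
  -- stationarity identity for (l-1, l)
  have hst := stationarity' hG hlc hx hopt hl1mem hlmem hij (hpos _ hl1mem) (hpos _ hlmem)
  by_cases hc : CM r l E (l-1) l = ∅
  · -- transfer all weight from l to l-1
    set t := x l with hts
    set y := update (update x (l-1) (x (l-1) + t)) l (x l - t) with hy
    have hsy : simplexOn l y := by
      refine simplexOn_update hx hl1mem hlmem hne ?_ le_rfl
      have := hpos _ hl1mem
      have := hxl0
      linarith
    have hyl : y l = 0 := by rw [hy, update_self]; ring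
    have hexp := lagF_update_expand E x hne t
    rw [← hy] at hexp
    have hCe : ∑ e ∈ E.filter (fun e => (l-1) ∈ e ∧ l ∈ e), ∏ v ∈ (e.erase (l-1)).erase l, x v
        = 0 := by
      rw [sumC_eq hG hne x, hc, Finset.sum_empty]
    rw [hCe, mul_zero, add_zero] at hexp
    have hswap := mySwap_le hG hlc hx.1 (by omega : 1 ≤ l - 1) (by omega : l - 1 ≤ l)
    have hxy : lagF E x ≤ lagF E y := by
      have h0 : 0 ≤ t * ((∑ e ∈ E.filter fun e => (l-1) ∈ e ∧ l ∉ e, ∏ v ∈ e.erase (l-1), x v)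
          - ∑ e ∈ E.filter fun e => l ∈ e ∧ (l-1) ∉ e, ∏ v ∈ e.erase l, x v) :=
        mul_nonneg (le_of_lt hxl0) (by linarith)
      linarith [hexp.ge, hexp.le, h0, hexp]
    calc lagF E x ≤ lagF E y := hxy
    _ ≤ lagr (l-1) (completeR r (l-1)) := lagF_vanish_top (by omega) hG hclq hsy hyl
  · -- contradiction: the counting hypothesis is violated
    exfalso
    set u := x (l-1) with hus
    set t := x l with hts
    have hu : 0 < u := hpos _ hl1mem
    have ht : 0 < t := hxl0
    have htu : t ≤ u := hmono (l-1) l hl1mem hlmem (by omega)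
    set D := (NS r l E (l-1) l).filter (fun A => insert l A ∉ E) with hD
    -- identify D with the set in hcount
    have hDeq : D = ((Finset.Icc 1 (l-2)).powersetCard (r-1)) \ link E l := by
      ext A
      rw [hD, Finset.mem_filter, NS, Finset.mem_filter, Finset.mem_powersetCard,
        Finset.mem_sdiff, Finset.mem_powersetCard]
      constructor
      · rintro ⟨⟨⟨hsub, hcard⟩, h1A, h2A, hins⟩, hnot⟩
        refine ⟨⟨fun a ha => ?_, hcard⟩, fun hlink => ?_⟩
        · have h3 := Finset.mem_Icc.mp (hsub ha)
          have h4 : a ≠ l - 1 := fun h => h1A (h ▸ ha)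
          have h5 : a ≠ l := fun h => h2A (h ▸ ha)
          rw [Finset.mem_Icc]; omega
        · rw [link, Finset.mem_image] at hlink
          obtain ⟨e, he, hh⟩ := hlink
          rw [Finset.mem_filter] at he
          have : insert l A = e := by rw [← hh, Finset.insert_erase he.2]
          exact hnot (this ▸ he.1)
      · rintro ⟨⟨hsub, hcard⟩, hnotlink⟩
        have hbnd : ∀ a ∈ A, 1 ≤ a ∧ a ≤ l - 2 := fun a ha => by
          have := Finset.mem_Icc.mp (hsub ha); omega
        have h1A : (l-1) ∉ A := fun h => by have := hbnd _ h; omega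
        have h2A : l ∉ A := fun h => by have := hbnd _ h; omega
        have hinsnot : insert l A ∉ E := by
          intro hmem
          refine hnotlink ?_
          rw [link, Finset.mem_image]
          exact ⟨insert l A, Finset.mem_filter.mpr ⟨hmem, Finset.mem_insert_self _ _⟩,
            Finset.erase_insert h2A⟩
        refine ⟨⟨⟨fun a ha => by have := hbnd _ ha; rw [Finset.mem_Icc]; omega, hcard⟩,
          h1A, h2A, ?_⟩, hinsnot⟩
        refine hclique _ (fun a ha => ?_) ?_
        · rcases Finset.mem_insert.mp ha with h | h
          · rw [h, Finset.mem_Icc]; omega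
          · have := hbnd _ h; rw [Finset.mem_Icc]; omega
        · rw [Finset.card_insert_of_notMem h1A, hcard]; omega
    -- identify CM with link2
    have hCMeq : CM r l E (l-1) l = link2 E (l-1) l := by
      ext B
      rw [CM, link2, Finset.mem_filter, Finset.mem_powersetCard, Finset.mem_image]
      constructor
      · rintro ⟨⟨hsub, hcard⟩, h1B, h2B, hins⟩
        refine ⟨insert (l-1) (insert l B), Finset.mem_filter.mpr ⟨hins,
          Finset.mem_insert_self _ _,
          Finset.mem_insert.mpr (Or.inr (Finset.mem_insert_self _ _))⟩, ?_⟩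
        have h1 : (l-1) ∉ insert l B := by
          intro h
          rcases Finset.mem_insert.mp h with h' | h'
          · omega
          · exact h1B h'
        rw [Finset.erase_insert h1, Finset.erase_insert h2B]
      · rintro ⟨e, he, hh⟩
        rw [Finset.mem_filter] at he
        obtain ⟨heE, h1e, h2e⟩ := he
        have hle : l ∈ e.erase (l-1) := Finset.mem_erase.mpr ⟨by omega, h2e⟩
        subst hh
        refine ⟨⟨((Finset.erase_subset _ _).trans (Finset.erase_subset _ _)).trans
          (hG e heE).2, ?_⟩,
          fun h => Finset.notMem_erase _ _ (Finset.mem_of_mem_erase h),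
          Finset.notMem_erase _ _, ?_⟩
        · rw [Finset.card_erase_of_mem hle, Finset.card_erase_of_mem h1e, (hG e heE).1]; omega
        · rw [Finset.insert_erase hle, Finset.insert_erase h1e]; exact heE
    set m := (CM r l E (l-1) l).card with hm
    have hm0 : 0 < m := Finset.card_pos.mpr (Finset.nonempty_of_ne_empty hc)
    have hm0' : (0:ℝ) < m := by exact_mod_cast hm0
    -- counting hypothesis in terms of D and CM
    have hcount' : (2:ℝ)^(r-3) * m ≤ (D.card : ℝ) := by
      rw [hDeq, hm, hCMeq]
      exact_mod_cast hcount
    -- upper bound for each B in CM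
    have hCMle : ∀ B ∈ CM r l E (l-1) l, ∏ v ∈ B, x v ≤ (u + t)^(r-2) := by
      intro B hB
      rw [CM, Finset.mem_filter, Finset.mem_powersetCard] at hB
      obtain ⟨⟨hsub, hcard⟩, h1B, h2B, _⟩ := hB
      have : ∀ b ∈ B, x b ≤ u + t := by
        intro b hb
        have h3 := Finset.mem_Icc.mp (hsub hb)
        have h4 : b ≠ l - 1 := fun h => h1B (h ▸ hb)
        have h5 : b ≠ l := fun h => h2B (h ▸ hb)
        exact bound_i hr hl hG hlc hclq hx hopt hpos h3.1 (by omega)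
      calc ∏ v ∈ B, x v ≤ ∏ _v ∈ B, (u + t) :=
            Finset.prod_le_prod (fun v hv => le_of_lt (hpos v (hsub hv))) this
      _ = (u + t)^(r-2) := by rw [Finset.prod_const, hcard]
    have hcle : ∑ B ∈ CM r l E (l-1) l, ∏ v ∈ B, x v ≤ (m:ℝ) * (u + t)^(r-2) := by
      have := Finset.sum_le_card_nsmul (CM r l E (l-1) l) (fun B => ∏ v ∈ B, x v)
        ((u + t)^(r-2)) hCMle
      rwa [nsmul_eq_mul, ← hm] at this
    -- lower bound for each A in D
    have hDge : ∀ A ∈ D, u^(r-1) ≤ ∏ v ∈ A, x v := by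
      intro A hA
      rw [hD, Finset.mem_filter, NS, Finset.mem_filter, Finset.mem_powersetCard] at hA
      obtain ⟨⟨⟨hsub, hcard⟩, h1A, h2A, _⟩, _⟩ := hA
      have : ∀ a ∈ A, u ≤ x a := by
        intro a ha
        have h3 := Finset.mem_Icc.mp (hsub ha)
        have h4 : a ≠ l - 1 := fun h => h1A (h ▸ ha)
        have h5 : a ≠ l := fun h => h2A (h ▸ ha)
        exact hmono a (l-1) (Finset.mem_Icc.mpr ⟨h3.1, h3.2⟩) hl1mem (by omega)
      calc u^(r-1) = ∏ _v ∈ A, u := by rw [Finset.prod_const, hcard]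
      _ ≤ ∏ v ∈ A, x v := Finset.prod_le_prod (fun v _ => le_of_lt hu) this
    have hDsum : (D.card : ℝ) * u^(r-1) ≤ ∑ A ∈ D, ∏ v ∈ A, x v := by
      have := Finset.card_nsmul_le_sum D (fun A => ∏ v ∈ A, x v) (u^(r-1)) hDge
      rwa [nsmul_eq_mul] at this
    -- assemble the chain
    have hchain : (m:ℝ) * (2^(r-3) * u^(r-1)) ≤ (m:ℝ) * ((u - t) * (u + t)^(r-2)) := by
      have s1 : (m:ℝ) * (2^(r-3) * u^(r-1)) ≤ (D.card : ℝ) * u^(r-1) := by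
        have : (0:ℝ) ≤ u^(r-1) := by positivity
        nlinarith [hcount', this]
      have s2 : ∑ A ∈ D, ∏ v ∈ A, x v ≤ (u - t) * ((m:ℝ) * (u + t)^(r-2)) := by
        rw [hst]
        exact mul_le_mul_of_nonneg_left hcle (by linarith)
      calc (m:ℝ) * (2^(r-3) * u^(r-1)) ≤ (D.card : ℝ) * u^(r-1) := s1
      _ ≤ ∑ A ∈ D, ∏ v ∈ A, x v := hDsum
      _ ≤ (u - t) * ((m:ℝ) * (u + t)^(r-2)) := s2
      _ = (m:ℝ) * ((u - t) * (u + t)^(r-2)) := by ring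
    have hkey : (2:ℝ)^(r-3) * u^(r-1) ≤ (u - t) * (u + t)^(r-2) :=
      (mul_le_mul_iff_right₀ hm0').mp hchain
    -- the strict opposite inequality
    have e1 : (u - t) * (u + t)^(r-2) = (u^2 - t^2) * (u + t)^(r-3) := by
      have h23 : r - 2 = (r-3) + 1 := by omega
      rw [h23, pow_succ]
      ring
    have e2 : (u + t)^(r-3) ≤ (2*u)^(r-3) :=
      pow_le_pow_left₀ (by positivity) (by linarith) _
    have e3 : (u^2 - t^2) * (u + t)^(r-3) < u^2 * (2*u)^(r-3) := by
      have hp : (0:ℝ) < (u + t)^(r-3) := by positivity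
      have h1 : (u^2 - t^2) * (u + t)^(r-3) < u^2 * (u + t)^(r-3) :=
        mul_lt_mul_of_pos_right (by nlinarith) hp
      have h2 : u^2 * (u + t)^(r-3) ≤ u^2 * (2*u)^(r-3) :=
        mul_le_mul_of_nonneg_left e2 (by positivity)
      linarith
    have e4 : u^2 * (2*u)^(r-3) = 2^(r-3) * u^(r-1) := by
      rw [mul_pow]
      have h13 : r - 1 = (r-3) + 2 := by omega
      rw [h13, pow_add]
      ring
    rw [e1] at hkey
    rw [e4] at e3
    linarith
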